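/- Every conformal superderivation of the loop super-Virasoro conformal superalgebra 𝔠𝔩𝔰 is inner: CDer(𝔠𝔩𝔰) = CInn(𝔠𝔩𝔰). -/

import Mathlib

open Polynomial

/-- Substitution `∂ ↦ ∂ + λ`. -/
noncomputable def sh (l : ℂ) (f : Polynomial ℂ) : Polynomial ℂ :=
  f.comp (Polynomial.X + Polynomial.C l)

/-- The loop super-Virasoro conformal superalgebra
`𝔠𝔩𝔰 = (⊕_{i∈ℤ}ℂ[∂]L_i) ⊕ (⊕_{i∈ℤ}ℂ[∂]G_i)` as a `ℂ[∂]`-module: the first component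
records the coefficients of the (even) `L_i`, the second those of the (odd) `G_i`. -/
abbrev CLS := (ℤ →₀ Polynomial ℂ) × (ℤ →₀ Polynomial ℂ)

/-- The action of `∂` on `𝔠𝔩𝔰`. -/
noncomputable def dC (u : CLS) : CLS :=
  (u.1.mapRange (fun f => Polynomial.X * f) (mul_zero _),
   u.2.mapRange (fun f => Polynomial.X * f) (mul_zero _))

/-- The `λ`-bracket of `𝔠𝔩𝔰`, determined by `[L_i ₗ L_j] = (∂+2λ)L_{i+j}`,
`[L_i ₗ G_j] = (∂+(3/2)λ)G_{i+j}`, `[G_i ₗ L_j] = ((1/2)∂+(3/2)λ)G_{i+j}`,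
`[G_i ₗ G_j] = 2L_{i+j}` and sesquilinearity
`[f(∂)a ₗ g(∂)b] = f(-λ)g(∂+λ)[a ₗ b]`. -/
noncomputable def br (l : ℂ) (u v : CLS) : CLS :=
  (u.1.sum (fun i f => v.1.sum fun j g =>
      Finsupp.single (i+j)
        (Polynomial.C (f.eval (-l)) * sh l g * (Polynomial.X + Polynomial.C (2*l))))
    + u.2.sum (fun i f => v.2.sum fun j g =>
      Finsupp.single (i+j) (Polynomial.C (2 * f.eval (-l)) * sh l g)),
   u.1.sum (fun i f => v.2.sum fun j g =>
      Finsupp.single (i+j)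
        (Polynomial.C (f.eval (-l)) * sh l g * (Polynomial.X + Polynomial.C ((3/2)*l))))
    + u.2.sum (fun i f => v.1.sum fun j g =>
      Finsupp.single (i+j)
        (Polynomial.C (f.eval (-l)) * sh l g *
          (Polynomial.C (1/2) * Polynomial.X + Polynomial.C ((3/2)*l)))))

/-- `D` is an even conformal superderivation of `𝔠𝔩𝔰`: parity-preserving, `ℂ`-linear,
polynomial in `λ`, with `D_λ(∂a) = (∂+λ)D_λ a` and
`D_λ[a_μ b] = [(D_λ a)_{λ+μ} b] + [a_μ (D_λ b)]`. -/
def IsEvenCDer (D : ℂ → CLS →ₗ[ℂ] CLS) : Prop :=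
  (∀ (l : ℂ) (u : CLS), (u.2 = 0 → (D l u).2 = 0) ∧ (u.1 = 0 → (D l u).1 = 0)) ∧
  (∀ u : CLS, ∃ (N : ℕ) (w : ℕ → CLS), ∀ l : ℂ,
      D l u = ∑ k ∈ Finset.range N, l ^ k • w k) ∧
  (∀ (l : ℂ) (u : CLS), D l (dC u) = dC (D l u) + l • D l u) ∧
  (∀ (l m : ℂ) (u v : CLS), D l (br m u v) = br (l+m) (D l u) v + br m u (D l v))

/-- `D` is an odd conformal superderivation of `𝔠𝔩𝔰`: parity-reversing, `ℂ`-linear,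
polynomial in `λ`, with `D_λ(∂a) = (∂+λ)D_λ a` and, for `ℤ₂`-homogeneous `a`,
`D_λ[a_μ b] = [(D_λ a)_{λ+μ} b] + (−1)^{|a|}[a_μ (D_λ b)]`. -/
def IsOddCDer (D : ℂ → CLS →ₗ[ℂ] CLS) : Prop :=
  (∀ (l : ℂ) (u : CLS), (u.2 = 0 → (D l u).1 = 0) ∧ (u.1 = 0 → (D l u).2 = 0)) ∧
  (∀ u : CLS, ∃ (N : ℕ) (w : ℕ → CLS), ∀ l : ℂ,
      D l u = ∑ k ∈ Finset.range N, l ^ k • w k) ∧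
  (∀ (l : ℂ) (u : CLS), D l (dC u) = dC (D l u) + l • D l u) ∧
  (∀ (l m : ℂ) (u v : CLS),
      (u.2 = 0 → D l (br m u v) = br (l+m) (D l u) v + br m u (D l v))
    ∧ (u.1 = 0 → D l (br m u v) = br (l+m) (D l u) v - br m u (D l v)))

section Aux
open Finsupp

noncomputable def Lb (j : ℤ) : CLS := (Finsupp.single j 1, 0)
noncomputable def Gb (j : ℤ) : CLS := (0, Finsupp.single j 1)

@[simp] lemma Lb_fst (j : ℤ) : (Lb j).1 = Finsupp.single j 1 := rfl
@[simp] lemma Lb_snd (j : ℤ) : (Lb j).2 = 0 := rfl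
@[simp] lemma Gb_fst (j : ℤ) : (Gb j).1 = 0 := rfl
@[simp] lemma Gb_snd (j : ℤ) : (Gb j).2 = Finsupp.single j 1 := rfl

lemma eval_sh (l z : ℂ) (f : ℂ[X]) : (sh l f).eval z = f.eval (z + l) := by
  simp [sh, eval_comp]

lemma poly_eq_of_eval_eq_off {p q : ℂ[X]} {s : Set ℂ} (hs : s.Finite)
    (h : ∀ z ∉ s, p.eval z = q.eval z) : p = q := by
  have hsub : p - q = 0 := by
    apply Polynomial.eq_zero_of_infinite_isRoot
    apply Set.Infinite.mono (s := sᶜ) _ hs.infinite_compl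
    intro z hz
    simp only [Set.mem_setOf_eq, Polynomial.IsRoot, Polynomial.eval_sub]
    rw [h z hz]; ring
  linear_combination hsub

lemma CLS_ext {a b : CLS} (h1 : ∀ k z, (a.1 k).eval z = (b.1 k).eval z)
    (h2 : ∀ k z, (a.2 k).eval z = (b.2 k).eval z) : a = b :=
  Prod.ext (Finsupp.ext fun k => Polynomial.funext (h1 k))
    (Finsupp.ext fun k => Polynomial.funext (h2 k))

@[simp] lemma add_fst_ap (u v : CLS) (k : ℤ) : (u + v).1 k = u.1 k + v.1 k := rfl
@[simp] lemma add_snd_ap (u v : CLS) (k : ℤ) : (u + v).2 k = u.2 k + v.2 k := rfl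
@[simp] lemma sub_fst_ap (u v : CLS) (k : ℤ) : (u - v).1 k = u.1 k - v.1 k := rfl
@[simp] lemma sub_snd_ap (u v : CLS) (k : ℤ) : (u - v).2 k = u.2 k - v.2 k := rfl
@[simp] lemma smul_fst_ap (c : ℂ) (u : CLS) (k : ℤ) : (c • u).1 k = c • (u.1 k) := rfl
@[simp] lemma smul_snd_ap (c : ℂ) (u : CLS) (k : ℤ) : (c • u).2 k = c • (u.2 k) := rfl
@[simp] lemma zero_fst_ap (k : ℤ) : ((0 : CLS)).1 k = 0 := rfl
@[simp] lemma zero_snd_ap (k : ℤ) : ((0 : CLS)).2 k = 0 := rfl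
@[simp] lemma dC_fst_ap (u : CLS) (k : ℤ) : (dC u).1 k = X * u.1 k := by
  simp [dC]
@[simp] lemma dC_snd_ap (u : CLS) (k : ℤ) : (dC u).2 k = X * u.2 k := by
  simp [dC]

end Aux
section Aux2
open Finsupp

lemma ev_dsum (w w' : ℤ →₀ ℂ[X]) (φ : ℂ[X] → ℂ[X] → ℂ[X]) (k : ℤ) (z : ℂ) :
    (((w.sum fun i f => w'.sum fun j g => Finsupp.single (i+j) (φ f g))) k).eval z
      = w.sum fun i f => w'.sum fun j g => if i + j = k then (φ f g).eval z else 0 := by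
  classical
  rw [Finsupp.sum_apply]
  have step : ∀ i f, ((w'.sum fun j g => Finsupp.single (i+j) (φ f g)) k)
      = w'.sum fun j g => if i + j = k then (φ f g) else 0 := by
    intro i f
    rw [Finsupp.sum_apply]
    exact Finsupp.sum_congr fun j _ => Finsupp.single_apply
  rw [Finsupp.sum_congr (g2 := fun i f => w'.sum fun j g => if i + j = k then (φ f g) else 0)
    (fun i _ => step i _)]
  unfold Finsupp.sum
  rw [Polynomial.eval_finset_sum]
  refine Finset.sum_congr rfl fun i _ => ?_
  rw [Polynomial.eval_finset_sum]
  refine Finset.sum_congr rfl fun j _ => ?_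
  simp only []
  split <;> simp

lemma br_fst_ev (l : ℂ) (u v : CLS) (k : ℤ) (z : ℂ) :
    ((br l u v).1 k).eval z =
      (u.1.sum fun i f => v.1.sum fun j g =>
        if i + j = k then f.eval (-l) * g.eval (z + l) * (z + 2*l) else 0)
    + (u.2.sum fun i f => v.2.sum fun j g =>
        if i + j = k then 2 * f.eval (-l) * g.eval (z + l) else 0) := by
  show ((_ + _ : ℤ →₀ ℂ[X]) k).eval z = _
  rw [Finsupp.add_apply, Polynomial.eval_add, ev_dsum, ev_dsum]
  congr 1 <;>
  · refine Finsupp.sum_congr fun i _ => Finsupp.sum_congr fun j _ => ?_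
    split
    · simp [eval_sh]
    · rfl

lemma br_snd_ev (l : ℂ) (u v : CLS) (k : ℤ) (z : ℂ) :
    ((br l u v).2 k).eval z =
      (u.1.sum fun i f => v.2.sum fun j g =>
        if i + j = k then f.eval (-l) * g.eval (z + l) * (z + (3/2)*l) else 0)
    + (u.2.sum fun i f => v.1.sum fun j g =>
        if i + j = k then f.eval (-l) * g.eval (z + l) * ((1/2)*z + (3/2)*l) else 0) := by
  show ((_ + _ : ℤ →₀ ℂ[X]) k).eval z = _
  rw [Finsupp.add_apply, Polynomial.eval_add, ev_dsum, ev_dsum]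
  congr 1 <;>
  · refine Finsupp.sum_congr fun i _ => Finsupp.sum_congr fun j _ => ?_
    split
    · simp [eval_sh]
    · rfl

end Aux2
section Aux3
open Finsupp

lemma sum_if_eval (w : ℤ →₀ ℂ[X]) (j k : ℤ) (ψ : ℂ[X] → ℂ) (hψ : ψ 0 = 0) :
    (w.sum fun i f => if i + j = k then ψ f else 0) = ψ (w (k - j)) := by
  classical
  unfold Finsupp.sum
  rw [Finset.sum_congr rfl (fun i _ => if_congr (by omega : (i + j = k) ↔ (i = k - j)) rfl rfl)]
  rw [Finset.sum_ite_eq' w.support (k-j) (fun i => ψ (w i))]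
  split
  · rfl
  · rw [Finsupp.notMem_support_iff.mp ‹_›, hψ]

lemma sum_if_eval' (w : ℤ →₀ ℂ[X]) (j k : ℤ) (ψ : ℂ[X] → ℂ) (hψ : ψ 0 = 0) :
    (w.sum fun i g => if j + i = k then ψ g else 0) = ψ (w (k - j)) := by
  rw [Finsupp.sum_congr (g2 := fun i g => if i + j = k then ψ g else 0)
    (fun i _ => if_congr (by omega) rfl rfl)]
  exact sum_if_eval w j k ψ hψ

lemma brR_L1 (m : ℂ) (u : CLS) (j k : ℤ) (z : ℂ) :
    ((br m u (Lb j)).1 k).eval z = (u.1 (k-j)).eval (-m) * (z + 2*m) := by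
  rw [br_fst_ev, Lb_fst, Lb_snd]
  rw [Finsupp.sum_congr (g2 := fun i f => if i + j = k then f.eval (-m) * (z + 2*m) else 0)
    (fun i _ => by rw [Finsupp.sum_single_index] <;> simp)]
  rw [sum_if_eval _ _ _ _ (by simp)]
  simp [Finsupp.sum_zero_index]

lemma brR_L2 (m : ℂ) (u : CLS) (j k : ℤ) (z : ℂ) :
    ((br m u (Lb j)).2 k).eval z = (u.2 (k-j)).eval (-m) * ((1/2)*z + (3/2)*m) := by
  rw [br_snd_ev, Lb_fst, Lb_snd]
  rw [Finsupp.sum_congr (f := u.2)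
    (g2 := fun i f => if i + j = k then f.eval (-m) * ((1/2)*z + (3/2)*m) else 0)
    (fun i _ => by rw [Finsupp.sum_single_index] <;> simp)]
  rw [sum_if_eval _ _ _ _ (by simp)]
  simp [Finsupp.sum_zero_index]

lemma brR_G1 (m : ℂ) (u : CLS) (j k : ℤ) (z : ℂ) :
    ((br m u (Gb j)).1 k).eval z = 2 * (u.2 (k-j)).eval (-m) := by
  rw [br_fst_ev, Gb_fst, Gb_snd]
  rw [Finsupp.sum_congr (f := u.2)
    (g2 := fun i f => if i + j = k then 2 * f.eval (-m) else 0)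
    (fun i _ => by rw [Finsupp.sum_single_index] <;> simp)]
  rw [sum_if_eval _ _ _ _ (by simp)]
  simp [Finsupp.sum_zero_index]

lemma brR_G2 (m : ℂ) (u : CLS) (j k : ℤ) (z : ℂ) :
    ((br m u (Gb j)).2 k).eval z = (u.1 (k-j)).eval (-m) * (z + (3/2)*m) := by
  rw [br_snd_ev, Gb_fst, Gb_snd]
  rw [Finsupp.sum_congr (f := u.1)
    (g2 := fun i f => if i + j = k then f.eval (-m) * (z + (3/2)*m) else 0)
    (fun i _ => by rw [Finsupp.sum_single_index] <;> simp)]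
  rw [sum_if_eval _ _ _ _ (by simp)]
  simp [Finsupp.sum_zero_index]

lemma brL_L1 (m : ℂ) (u : CLS) (j k : ℤ) (z : ℂ) :
    ((br m (Lb j) u).1 k).eval z = (u.1 (k-j)).eval (z+m) * (z + 2*m) := by
  rw [br_fst_ev, Lb_fst, Lb_snd]
  rw [Finsupp.sum_single_index (by simp)]
  rw [Finsupp.sum_congr (f := u.1)
    (g2 := fun i g => if j + i = k then g.eval (z+m) * (z + 2*m) else 0)
    (fun i _ => by simp)]
  rw [sum_if_eval' _ _ _ _ (by simp)]
  simp [Finsupp.sum_zero_index]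

lemma brL_L2 (m : ℂ) (u : CLS) (j k : ℤ) (z : ℂ) :
    ((br m (Lb j) u).2 k).eval z = (u.2 (k-j)).eval (z+m) * (z + (3/2)*m) := by
  rw [br_snd_ev, Lb_fst, Lb_snd]
  rw [Finsupp.sum_single_index (by simp)]
  rw [Finsupp.sum_congr (f := u.2)
    (g2 := fun i g => if j + i = k then g.eval (z+m) * (z + (3/2)*m) else 0)
    (fun i _ => by simp)]
  rw [sum_if_eval' _ _ _ _ (by simp)]
  simp [Finsupp.sum_zero_index]

lemma brL_G1 (m : ℂ) (u : CLS) (j k : ℤ) (z : ℂ) :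
    ((br m (Gb j) u).1 k).eval z = 2 * (u.2 (k-j)).eval (z+m) := by
  rw [br_fst_ev, Gb_fst, Gb_snd]
  rw [Finsupp.sum_single_index (by simp)]
  rw [Finsupp.sum_congr (f := u.2)
    (g2 := fun i g => if j + i = k then 2 * g.eval (z+m) else 0)
    (fun i _ => by simp)]
  rw [sum_if_eval' _ _ _ _ (by simp)]
  simp [Finsupp.sum_zero_index]

lemma brL_G2 (m : ℂ) (u : CLS) (j k : ℤ) (z : ℂ) :
    ((br m (Gb j) u).2 k).eval z = (u.1 (k-j)).eval (z+m) * ((1/2)*z + (3/2)*m) := by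
  rw [br_snd_ev, Gb_fst, Gb_snd]
  rw [Finsupp.sum_single_index (by simp)]
  rw [Finsupp.sum_congr (f := u.1)
    (g2 := fun i g => if j + i = k then g.eval (z+m) * ((1/2)*z + (3/2)*m) else 0)
    (fun i _ => by simp)]
  rw [sum_if_eval' _ _ _ _ (by simp)]
  simp [Finsupp.sum_zero_index]

end Aux3
section Aux4
open Finsupp

lemma Lb0_ap (k : ℤ) : (Lb 0).1 k = if (0:ℤ) = k then 1 else 0 := Finsupp.single_apply
lemma Gb0_ap (k : ℤ) : (Gb 0).2 k = if (0:ℤ) = k then 1 else 0 := Finsupp.single_apply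

lemma br_Lb_Lb0 (m : ℂ) (j : ℤ) : br m (Lb j) (Lb 0) = dC (Lb j) + (2*m) • Lb j := by
  apply CLS_ext <;> intro k z
  · rw [brL_L1, Lb0_ap]
    simp only [add_fst_ap, dC_fst_ap, smul_fst_ap, Lb_fst, Polynomial.eval_add,
      Polynomial.eval_mul, Polynomial.eval_X, Polynomial.eval_smul, smul_eq_mul]
    rw [Finsupp.single_apply]
    by_cases h : j = k
    · rw [if_pos (by omega), if_pos h]; simp
    · rw [if_neg (by omega), if_neg h]; simp
  · rw [brL_L2]; simp

lemma br_Lb0_Lb0 : br 0 (Lb 0) (Lb 0) = dC (Lb 0) := by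
  have h := br_Lb_Lb0 0 0
  simpa using h

lemma br_Gb_Lb0 (m : ℂ) (j : ℤ) :
    br m (Gb j) (Lb 0) = (1/2 : ℂ) • dC (Gb j) + ((3/2)*m) • Gb j := by
  apply CLS_ext <;> intro k z
  · rw [brL_G1]; simp
  · rw [brL_G2, Lb0_ap]
    simp only [add_snd_ap, dC_snd_ap, smul_snd_ap, Gb_snd, Polynomial.eval_add,
      Polynomial.eval_mul, Polynomial.eval_X, Polynomial.eval_smul, smul_eq_mul]
    rw [Finsupp.single_apply]
    by_cases h : j = k
    · rw [if_pos (by omega), if_pos h]; simp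
    · rw [if_neg (by omega), if_neg h]; simp
  

lemma br_Gb0_Gb0 (m : ℂ) : br m (Gb 0) (Gb 0) = (2 : ℂ) • Lb 0 := by
  apply CLS_ext <;> intro k z
  · rw [brR_G1, Gb0_ap]
    simp only [smul_fst_ap, Lb_fst, Polynomial.eval_smul, smul_eq_mul]
    rw [Finsupp.single_apply]
    by_cases h : (0:ℤ) = k
    · rw [if_pos (by omega), if_pos h]; simp
    · rw [if_neg (by omega), if_neg h]; simp
  · rw [brR_G2]; simp

end Aux4
section Aux5
open Finsupp

private lemma inner_add (v₁ v₂ : ℤ →₀ ℂ[X]) (i k : ℤ) (d : ℂ) (T : ℂ → ℂ)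
    (h0 : T 0 = 0) (hadd : ∀ s t, T (s+t) = T s + T t) :
    ((v₁ + v₂).sum fun j g => if i + j = k then T (g.eval d) else 0)
    = (v₁.sum fun j g => if i + j = k then T (g.eval d) else 0)
    + (v₂.sum fun j g => if i + j = k then T (g.eval d) else 0) := by
  refine Finsupp.sum_add_index' (fun a => by simp [h0]) (fun a b₁ b₂ => ?_)
  simp only [Polynomial.eval_add, hadd]
  split <;> simp

private lemma inner_smul (v : ℤ →₀ ℂ[X]) (c : ℂ) (i k : ℤ) (d : ℂ) (T : ℂ → ℂ)
    (h0 : T 0 = 0) (hmul : ∀ s t, T (s * t) = s * T t) :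
    ((c • v).sum fun j g => if i + j = k then T (g.eval d) else 0)
    = c * (v.sum fun j g => if i + j = k then T (g.eval d) else 0) := by
  rw [Finsupp.sum_smul_index' (fun a => by simp [h0]), Finsupp.mul_sum]
  refine Finsupp.sum_congr fun j _ => ?_
  simp only [Polynomial.eval_smul, smul_eq_mul, hmul]
  split <;> simp

private lemma inner_dC (v : ℤ →₀ ℂ[X]) (i k : ℤ) (d : ℂ) (T : ℂ → ℂ)
    (h0 : T 0 = 0) (hmul : ∀ s t, T (s * t) = s * T t) :
    ((v.mapRange (fun f => X * f) (mul_zero _)).sum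
        fun j g => if i + j = k then T (g.eval d) else 0)
    = d * (v.sum fun j g => if i + j = k then T (g.eval d) else 0) := by
  rw [Finsupp.sum_mapRange_index (fun a => by simp [h0]), Finsupp.mul_sum]
  refine Finsupp.sum_congr fun j _ => ?_
  simp only [Polynomial.eval_mul, Polynomial.eval_X, hmul]
  split <;> simp

lemma br_zero_right (l : ℂ) (u : CLS) : br l u 0 = 0 := by
  apply CLS_ext <;> intro k z <;>
  · first
    | rw [br_fst_ev] | rw [br_snd_ev]
    simp [Finsupp.sum_zero_index, Finsupp.sum]

lemma br_add_right (l : ℂ) (u v w : CLS) : br l u (v + w) = br l u v + br l u w := by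
  apply CLS_ext <;> intro k z
  · rw [br_fst_ev]
    simp only [add_fst_ap, add_snd_ap, Polynomial.eval_add]
    rw [br_fst_ev, br_fst_ev]
    rw [Finsupp.sum_congr (g2 := fun i f =>
          (v.1.sum fun j g => if i + j = k then f.eval (-l) * g.eval (z+l) * (z + 2*l) else 0)
        + (w.1.sum fun j g => if i + j = k then f.eval (-l) * g.eval (z+l) * (z + 2*l) else 0))
        (fun i _ => inner_add v.1 w.1 i k (z+l)
          (fun s => (u.1 i).eval (-l) * s * (z + 2*l)) (by ring) (fun s t => by ring)),
        Finsupp.sum_congr (f := u.2) (g2 := fun i f =>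
          (v.2.sum fun j g => if i + j = k then 2 * f.eval (-l) * g.eval (z+l) else 0)
        + (w.2.sum fun j g => if i + j = k then 2 * f.eval (-l) * g.eval (z+l) else 0))
        (fun i _ => inner_add v.2 w.2 i k (z+l)
          (fun s => 2 * (u.2 i).eval (-l) * s) (by ring) (fun s t => by ring)),
        Finsupp.sum_add, Finsupp.sum_add]
    ring
  · rw [br_snd_ev]
    simp only [add_fst_ap, add_snd_ap, Polynomial.eval_add]
    rw [br_snd_ev, br_snd_ev]
    rw [Finsupp.sum_congr (g2 := fun i f =>
          (v.2.sum fun j g => if i + j = k then f.eval (-l) * g.eval (z+l) * (z + (3/2)*l) else 0)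
        + (w.2.sum fun j g => if i + j = k then f.eval (-l) * g.eval (z+l) * (z + (3/2)*l) else 0))
        (fun i _ => inner_add v.2 w.2 i k (z+l)
          (fun s => (u.1 i).eval (-l) * s * (z + (3/2)*l)) (by ring) (fun s t => by ring)),
        Finsupp.sum_congr (f := u.2) (g2 := fun i f =>
          (v.1.sum fun j g => if i + j = k then f.eval (-l) * g.eval (z+l) * ((1/2)*z + (3/2)*l) else 0)
        + (w.1.sum fun j g => if i + j = k then f.eval (-l) * g.eval (z+l) * ((1/2)*z + (3/2)*l) else 0))
        (fun i _ => inner_add v.1 w.1 i k (z+l)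
          (fun s => (u.2 i).eval (-l) * s * ((1/2)*z + (3/2)*l)) (by ring) (fun s t => by ring)),
        Finsupp.sum_add, Finsupp.sum_add]
    ring

lemma br_smul_right (l : ℂ) (c : ℂ) (u v : CLS) : br l u (c • v) = c • br l u v := by
  apply CLS_ext <;> intro k z
  · rw [br_fst_ev]
    simp only [smul_fst_ap, smul_snd_ap, Polynomial.eval_smul, smul_eq_mul]
    rw [br_fst_ev]
    rw [Finsupp.sum_congr (g2 := fun i f =>
          c * (v.1.sum fun j g => if i + j = k then f.eval (-l) * g.eval (z+l) * (z + 2*l) else 0))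
        (fun i _ => inner_smul v.1 c i k (z+l)
          (fun s => (u.1 i).eval (-l) * s * (z + 2*l)) (by ring) (fun s t => by ring)),
        Finsupp.sum_congr (f := u.2) (g2 := fun i f =>
          c * (v.2.sum fun j g => if i + j = k then 2 * f.eval (-l) * g.eval (z+l) else 0))
        (fun i _ => inner_smul v.2 c i k (z+l)
          (fun s => 2 * (u.2 i).eval (-l) * s) (by ring) (fun s t => by ring))]
    rw [← Finsupp.mul_sum, ← Finsupp.mul_sum]
    ring
  · rw [br_snd_ev]
    simp only [smul_fst_ap, smul_snd_ap, Polynomial.eval_smul, smul_eq_mul]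
    rw [br_snd_ev]
    rw [Finsupp.sum_congr (g2 := fun i f =>
          c * (v.2.sum fun j g => if i + j = k then f.eval (-l) * g.eval (z+l) * (z + (3/2)*l) else 0))
        (fun i _ => inner_smul v.2 c i k (z+l)
          (fun s => (u.1 i).eval (-l) * s * (z + (3/2)*l)) (by ring) (fun s t => by ring)),
        Finsupp.sum_congr (f := u.2) (g2 := fun i f =>
          c * (v.1.sum fun j g => if i + j = k then f.eval (-l) * g.eval (z+l) * ((1/2)*z + (3/2)*l) else 0))
        (fun i _ => inner_smul v.1 c i k (z+l)
          (fun s => (u.2 i).eval (-l) * s * ((1/2)*z + (3/2)*l)) (by ring) (fun s t => by ring))]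
    rw [← Finsupp.mul_sum, ← Finsupp.mul_sum]
    ring

lemma br_dC_right (l : ℂ) (u v : CLS) : br l u (dC v) = dC (br l u v) + l • br l u v := by
  apply CLS_ext <;> intro k z
  · rw [br_fst_ev]
    simp only [add_fst_ap, dC_fst_ap, smul_fst_ap, Polynomial.eval_add, Polynomial.eval_mul,
      Polynomial.eval_X, Polynomial.eval_smul, smul_eq_mul]
    rw [br_fst_ev]
    have hd1 : (dC v).1 = v.1.mapRange (fun f => X * f) (mul_zero _) := rfl
    have hd2 : (dC v).2 = v.2.mapRange (fun f => X * f) (mul_zero _) := rfl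
    rw [hd1, hd2]
    rw [Finsupp.sum_congr (g2 := fun i f =>
          (z+l) * (v.1.sum fun j g => if i + j = k then f.eval (-l) * g.eval (z+l) * (z + 2*l) else 0))
        (fun i _ => inner_dC v.1 i k (z+l)
          (fun s => (u.1 i).eval (-l) * s * (z + 2*l)) (by ring) (fun s t => by ring)),
        Finsupp.sum_congr (f := u.2) (g2 := fun i f =>
          (z+l) * (v.2.sum fun j g => if i + j = k then 2 * f.eval (-l) * g.eval (z+l) else 0))
        (fun i _ => inner_dC v.2 i k (z+l)
          (fun s => 2 * (u.2 i).eval (-l) * s) (by ring) (fun s t => by ring))]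
    rw [← Finsupp.mul_sum, ← Finsupp.mul_sum]
    ring
  · rw [br_snd_ev]
    simp only [add_snd_ap, dC_snd_ap, smul_snd_ap, Polynomial.eval_add, Polynomial.eval_mul,
      Polynomial.eval_X, Polynomial.eval_smul, smul_eq_mul]
    rw [br_snd_ev]
    have hd1 : (dC v).1 = v.1.mapRange (fun f => X * f) (mul_zero _) := rfl
    have hd2 : (dC v).2 = v.2.mapRange (fun f => X * f) (mul_zero _) := rfl
    rw [hd1, hd2]
    rw [Finsupp.sum_congr (g2 := fun i f =>
          (z+l) * (v.2.sum fun j g => if i + j = k then f.eval (-l) * g.eval (z+l) * (z + (3/2)*l) else 0))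
        (fun i _ => inner_dC v.2 i k (z+l)
          (fun s => (u.1 i).eval (-l) * s * (z + (3/2)*l)) (by ring) (fun s t => by ring)),
        Finsupp.sum_congr (f := u.2) (g2 := fun i f =>
          (z+l) * (v.1.sum fun j g => if i + j = k then f.eval (-l) * g.eval (z+l) * ((1/2)*z + (3/2)*l) else 0))
        (fun i _ => inner_dC v.1 i k (z+l)
          (fun s => (u.2 i).eval (-l) * s * ((1/2)*z + (3/2)*l)) (by ring) (fun s t => by ring))]
    rw [← Finsupp.mul_sum, ← Finsupp.mul_sum]
    ring

end Aux5
section Aux6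

lemma HL1 {l : ℂ} (hl : l ≠ 0) {p : ℂ[X]}
    (h : ∀ m z : ℂ, (z + (l + 2*m)) * p.eval z = p.eval (-(l+m)) * (z + 2*(l+m))) :
    p = 0 := by
  apply Polynomial.funext
  intro z
  have h1 := h (-z/2 - l) z
  have e1 : z + (l + 2*(-z/2 - l)) = -l := by ring
  have e2 : z + 2*(l + (-z/2 - l)) = 0 := by ring
  rw [e1, e2, mul_zero] at h1
  have := mul_eq_zero.mp h1
  simp only [Polynomial.eval_zero]
  rcases this with h' | h'
  · exact absurd (neg_eq_zero.mp h') hl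
  · exact h'

lemma HL2 {l : ℂ} (hl : l ≠ 0) {p : ℂ[X]}
    (h : ∀ m z : ℂ, (z + (l + 2*m)) * p.eval z
        = p.eval (-(l+m)) * ((1/2)*z + (3/2)*(l+m))) :
    p = 0 := by
  apply poly_eq_of_eval_eq_off (s := ({3*l} : Set ℂ)) (Set.finite_singleton _)
  intro z hz
  have h1 := h (-z/3 - l) z
  have e1 : z + (l + 2*(-z/3 - l)) = z/3 - l := by ring
  have e2 : (1/2)*z + (3/2)*(l + (-z/3 - l)) = 0 := by ring
  rw [e1, e2, mul_zero] at h1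
  have hne : z/3 - l ≠ 0 := by
    intro hc
    exact hz (by simp only [Set.mem_singleton_iff]; linear_combination 3*hc)
  simp only [Polynomial.eval_zero]
  exact (mul_eq_zero.mp h1).resolve_left hne

lemma HG1 {l : ℂ} (hl : l ≠ 0) {p : ℂ[X]}
    (h : ∀ m z : ℂ, ((1/2)*z + ((1/2)*l + (3/2)*m)) * p.eval z
        = p.eval (-(l+m)) * (z + 2*(l+m))) :
    p = 0 := by
  apply poly_eq_of_eval_eq_off (s := ({-(4*l)} : Set ℂ)) (Set.finite_singleton _)
  intro z hz
  have h1 := h (-z/2 - l) z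
  have e1 : (1/2)*z + ((1/2)*l + (3/2)*(-z/2 - l)) = -z/4 - l := by ring
  have e2 : z + 2*(l + (-z/2 - l)) = 0 := by ring
  rw [e1, e2, mul_zero] at h1
  have hne : -z/4 - l ≠ 0 := by
    intro hc
    exact hz (by simp only [Set.mem_singleton_iff]; linear_combination (-4 : ℂ)*hc)
  simp only [Polynomial.eval_zero]
  exact (mul_eq_zero.mp h1).resolve_left hne

lemma HG2 {l : ℂ} (hl : l ≠ 0) {p : ℂ[X]}
    (h : ∀ m z : ℂ, ((1/2)*z + ((1/2)*l + (3/2)*m)) * p.eval z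
        = p.eval (-(l+m)) * ((1/2)*z + (3/2)*(l+m))) :
    p = 0 := by
  apply Polynomial.funext
  intro z
  have h1 := h (-z/3 - l) z
  have e1 : (1/2)*z + ((1/2)*l + (3/2)*(-z/3 - l)) = -l := by ring
  have e2 : (1/2)*z + (3/2)*(l + (-z/3 - l)) = 0 := by ring
  rw [e1, e2, mul_zero] at h1
  simp only [Polynomial.eval_zero]
  exact (mul_eq_zero.mp h1).resolve_left (neg_ne_zero.mpr hl)

end Aux6
section Aux7
open Finsupp

lemma comp_sum_coeff (s : Finset ℕ) (f : ℕ → CLS) (k : ℤ) (n : ℕ) :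
    (((∑ t ∈ s, f t : CLS)).1 k).coeff n = ∑ t ∈ s, (((f t).1 k).coeff n) := by
  rw [Prod.fst_sum, Finsupp.finset_sum_apply, Polynomial.finset_sum_coeff]

lemma comp_sum_coeff2 (s : Finset ℕ) (f : ℕ → CLS) (k : ℤ) (n : ℕ) :
    (((∑ t ∈ s, f t : CLS)).2 k).coeff n = ∑ t ∈ s, (((f t).2 k).coeff n) := by
  rw [Prod.snd_sum, Finsupp.finset_sum_apply, Polynomial.finset_sum_coeff]

/-- Construction of the even part of `x` from `D (Lb 0)` and `D (Gb 0)`. -/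
lemma evenL0 (D : ℂ → CLS →ₗ[ℂ] CLS) (h : IsEvenCDer D) :
    ∃ F : ℤ →₀ ℂ[X], ∀ l : ℂ, l ≠ 0 →
      (∀ k z, ((D l (Lb 0)).1 k).eval z = (F k).eval (-l) * (z + 2*l)) ∧
      (∀ k z, ((D l (Gb 0)).2 k).eval z = (F k).eval (-l) * (z + (3/2)*l)) := by
  obtain ⟨hpar, hpoly, hdc, hbr⟩ := h
  obtain ⟨N, w, hw⟩ := hpoly (Lb 0)
  refine ⟨∑ t ∈ Finset.range N, ((w t).1).mapRange
      (fun p => Polynomial.C (p.coeff 1) * (-X)^t) (by simp), fun l hl => ?_⟩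
  set F : ℤ →₀ ℂ[X] := ∑ t ∈ Finset.range N, ((w t).1).mapRange
      (fun p => Polynomial.C (p.coeff 1) * (-X)^t) (by simp) with hF
  have hFev : ∀ k : ℤ, (F k).eval (-l) = ∑ t ∈ Finset.range N, ((w t).1 k).coeff 1 * l^t := by
    intro k
    rw [hF, Finsupp.finset_sum_apply, Polynomial.eval_finset_sum]
    refine Finset.sum_congr rfl fun t _ => ?_
    rw [Finsupp.mapRange_apply]
    simp
  have heq : dC (D l (Lb 0)) + l • D l (Lb 0)
      = br l (D l (Lb 0)) (Lb 0) + br 0 (Lb 0) (D l (Lb 0)) := by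
    have e := hbr l 0 (Lb 0) (Lb 0)
    rw [br_Lb0_Lb0, hdc, add_zero] at e
    exact e
  have hsc : ∀ k z, l * ((D l (Lb 0)).1 k).eval z
      = ((D l (Lb 0)).1 k).eval (-l) * (z + 2*l) := by
    intro k z
    have e := congrArg (fun y : CLS => (y.1 k).eval z) heq
    simp only [add_fst_ap, dC_fst_ap, smul_fst_ap, Polynomial.eval_add, Polynomial.eval_mul,
      Polynomial.eval_X, Polynomial.eval_smul, smul_eq_mul] at e
    rw [brR_L1, brL_L1] at e
    simp only [sub_zero, add_zero, mul_zero, zero_add] at e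
    linear_combination e
  have hcoe : ∀ k, ((D l (Lb 0)).1 k).eval (-l) = l * ((D l (Lb 0)).1 k).coeff 1 := by
    intro k
    have hpo : Polynomial.C l * (D l (Lb 0)).1 k
        = Polynomial.C (((D l (Lb 0)).1 k).eval (-l)) * (X + Polynomial.C (2*l)) := by
      apply Polynomial.funext
      intro z
      simp only [Polynomial.eval_mul, Polynomial.eval_add, Polynomial.eval_C, Polynomial.eval_X]
      linear_combination hsc k z
    have e := congrArg (fun p : ℂ[X] => p.coeff 1) hpo
    simp only [Polynomial.coeff_C_mul, Polynomial.coeff_add, Polynomial.coeff_X_one,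
      Polynomial.coeff_C, if_neg one_ne_zero] at e
    rw [e]; ring
  have hc1 : ∀ k, ((D l (Lb 0)).1 k).coeff 1 = (F k).eval (-l) := by
    intro k
    rw [hFev, hw l, comp_sum_coeff]
    refine Finset.sum_congr rfl fun t _ => ?_
    show ((l ^ t • w t).1 k).coeff 1 = _
    simp [Polynomial.coeff_smul, smul_eq_mul, mul_comm]
  have hev1 : ∀ k z, ((D l (Lb 0)).1 k).eval z = (F k).eval (-l) * (z + 2*l) := by
    intro k z
    apply mul_left_cancel₀ hl
    have e := hsc k z
    rw [hcoe k, hc1 k] at e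
    linear_combination e
  refine ⟨hev1, ?_⟩
  -- now Gb 0
  have heqG : (2:ℂ) • D l (Lb 0)
      = br l (D l (Gb 0)) (Gb 0) + br 0 (Gb 0) (D l (Gb 0)) := by
    have e := hbr l 0 (Gb 0) (Gb 0)
    rw [br_Gb0_Gb0, map_smul, add_zero] at e
    exact e
  have hscG : ∀ k z, 2 * ((F k).eval (-l) * (z + 2*l))
      = 2 * ((D l (Gb 0)).2 k).eval (-l) + 2 * ((D l (Gb 0)).2 k).eval z := by
    intro k z
    have e := congrArg (fun y : CLS => (y.1 k).eval z) heqG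
    simp only [smul_fst_ap, add_fst_ap, Polynomial.eval_add, Polynomial.eval_smul,
      smul_eq_mul] at e
    rw [brR_G1, brL_G1] at e
    simp only [sub_zero, add_zero] at e
    rw [hev1 k z] at e
    linear_combination e
  have hBml : ∀ k, 2 * ((D l (Gb 0)).2 k).eval (-l) = (F k).eval (-l) * l := by
    intro k
    have e := hscG k (-l)
    linear_combination -e / 2
  intro k z
  have e := hscG k z
  have e2 := hBml k
  linear_combination -e / 2 - e2 / 2
end Aux7
section Aux8
open Finsupp

/-- Construction of the odd part of `x` from `D (Lb 0)` and `D (Gb 0)`. -/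
lemma oddL0 (D : ℂ → CLS →ₗ[ℂ] CLS) (h : IsOddCDer D) :
    ∃ Hh : ℤ →₀ ℂ[X], ∀ l : ℂ, l ≠ 0 →
      (∀ k z, ((D l (Lb 0)).2 k).eval z = (Hh k).eval (-l) * ((1/2)*z + (3/2)*l)) ∧
      (∀ k z, ((D l (Gb 0)).1 k).eval z = 2 * (Hh k).eval (-l)) := by
  obtain ⟨hpar, hpoly, hdc, hbr⟩ := h
  obtain ⟨N, w, hw⟩ := hpoly (Lb 0)
  refine ⟨∑ t ∈ Finset.range N, ((w t).2).mapRange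
      (fun p => Polynomial.C (2 * p.coeff 1) * (-X)^t) (by simp), fun l hl => ?_⟩
  set Hh : ℤ →₀ ℂ[X] := ∑ t ∈ Finset.range N, ((w t).2).mapRange
      (fun p => Polynomial.C (2 * p.coeff 1) * (-X)^t) (by simp) with hH
  have hHev : ∀ k : ℤ, (Hh k).eval (-l)
      = ∑ t ∈ Finset.range N, 2 * ((w t).2 k).coeff 1 * l^t := by
    intro k
    rw [hH, Finsupp.finset_sum_apply, Polynomial.eval_finset_sum]
    refine Finset.sum_congr rfl fun t _ => ?_
    rw [Finsupp.mapRange_apply]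
    simp
  have heq : dC (D l (Lb 0)) + l • D l (Lb 0)
      = br l (D l (Lb 0)) (Lb 0) + br 0 (Lb 0) (D l (Lb 0)) := by
    have e := (hbr l 0 (Lb 0) (Lb 0)).1 rfl
    rw [br_Lb0_Lb0, hdc, add_zero] at e
    exact e
  have hsc : ∀ k z, l * ((D l (Lb 0)).2 k).eval z
      = ((D l (Lb 0)).2 k).eval (-l) * ((1/2)*z + (3/2)*l) := by
    intro k z
    have e := congrArg (fun y : CLS => (y.2 k).eval z) heq
    simp only [add_snd_ap, dC_snd_ap, smul_snd_ap, Polynomial.eval_add, Polynomial.eval_mul,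
      Polynomial.eval_X, Polynomial.eval_smul, smul_eq_mul] at e
    rw [brR_L2, brL_L2] at e
    simp only [sub_zero, add_zero, mul_zero, zero_add] at e
    linear_combination e
  have hcoe : ∀ k, ((D l (Lb 0)).2 k).eval (-l) = 2 * l * ((D l (Lb 0)).2 k).coeff 1 := by
    intro k
    have hpo : Polynomial.C l * (D l (Lb 0)).2 k
        = Polynomial.C (((D l (Lb 0)).2 k).eval (-l))
          * (Polynomial.C (1/2) * X + Polynomial.C ((3/2)*l)) := by
      apply Polynomial.funext
      intro z
      simp only [Polynomial.eval_mul, Polynomial.eval_add, Polynomial.eval_C, Polynomial.eval_X]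
      linear_combination hsc k z
    have e := congrArg (fun p : ℂ[X] => p.coeff 1) hpo
    simp only [Polynomial.coeff_C_mul, Polynomial.coeff_add, Polynomial.coeff_X_one,
      Polynomial.coeff_C, if_neg one_ne_zero] at e
    linear_combination -2*e
  have hc1 : ∀ k, 2 * ((D l (Lb 0)).2 k).coeff 1 = (Hh k).eval (-l) := by
    intro k
    rw [hHev, hw l, comp_sum_coeff2, Finset.mul_sum]
    refine Finset.sum_congr rfl fun t _ => ?_
    show 2 * ((l ^ t • w t).2 k).coeff 1 = _
    simp [Polynomial.coeff_smul, smul_eq_mul]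
    ring
  have hevL : ∀ k z, ((D l (Lb 0)).2 k).eval z = (Hh k).eval (-l) * ((1/2)*z + (3/2)*l) := by
    intro k z
    apply mul_left_cancel₀ hl
    have e := hsc k z
    rw [hcoe k] at e
    rw [← hc1 k]
    linear_combination e
  refine ⟨hevL, ?_⟩
  -- now Gb 0
  have heqG : (2:ℂ) • D l (Lb 0)
      = br l (D l (Gb 0)) (Gb 0) - br 0 (Gb 0) (D l (Gb 0)) := by
    have e := (hbr l 0 (Gb 0) (Gb 0)).2 rfl
    rw [br_Gb0_Gb0, map_smul, add_zero] at e
    exact e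
  have hscG : ∀ k z, 2 * ((Hh k).eval (-l) * ((1/2)*z + (3/2)*l))
      = ((D l (Gb 0)).1 k).eval (-l) * (z + (3/2)*l)
        - ((D l (Gb 0)).1 k).eval z * ((1/2)*z) := by
    intro k z
    have e := congrArg (fun y : CLS => (y.2 k).eval z) heqG
    simp only [smul_snd_ap, sub_snd_ap, Polynomial.eval_sub, Polynomial.eval_smul,
      smul_eq_mul] at e
    rw [brR_G2, brL_G2] at e
    simp only [sub_zero, add_zero, mul_zero] at e
    rw [hevL k z] at e
    linear_combination e
  have halpha : ∀ k, ((D l (Gb 0)).1 k).eval (-l) = 2 * (Hh k).eval (-l) := by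
    intro k
    apply mul_left_cancel₀ hl
    have e := hscG k (-l)
    linear_combination -e
  have hevG : ∀ k, (D l (Gb 0)).1 k = Polynomial.C (2 * (Hh k).eval (-l)) := by
    intro k
    apply poly_eq_of_eval_eq_off (s := ({0} : Set ℂ)) (Set.finite_singleton _)
    intro z hz
    have hz0 : z ≠ 0 := by simpa using hz
    apply mul_left_cancel₀ hz0
    have e := hscG k z
    rw [halpha k] at e
    simp only [Polynomial.eval_C]
    linear_combination 2 * e
  intro k z
  rw [hevG k]
  simp
end Aux8
section Aux9
open Finsupp

lemma evenGen (D : ℂ → CLS →ₗ[ℂ] CLS) (h : IsEvenCDer D) (F : ℤ →₀ ℂ[X]) (l : ℂ)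
    (hl : l ≠ 0)
    (hL0 : ∀ k z, ((D l (Lb 0)).1 k).eval z = (F k).eval (-l) * (z + 2*l)) :
    (∀ j k z, ((D l (Lb j)).1 k).eval z = (F (k-j)).eval (-l) * (z + 2*l)) ∧
    (∀ j k z, ((D l (Gb j)).2 k).eval z = (F (k-j)).eval (-l) * (z + (3/2)*l)) := by
  obtain ⟨hpar, hpoly, hdc, hbr⟩ := h
  constructor
  · intro j k
    have hsc : ∀ m z, z * ((D l (Lb j)).1 k).eval z + l * ((D l (Lb j)).1 k).eval z
        + (2*m) * ((D l (Lb j)).1 k).eval z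
        = ((D l (Lb j)).1 k).eval (-(l+m)) * (z + 2*(l+m))
          + ((F (k-j)).eval (-l) * ((z+m) + 2*l)) * (z + 2*m) := by
      intro m z
      have e := hbr l m (Lb j) (Lb 0)
      rw [br_Lb_Lb0, map_add, map_smul, hdc] at e
      have e2 := congrArg (fun y : CLS => (y.1 k).eval z) e
      simp only [add_fst_ap, dC_fst_ap, smul_fst_ap, Polynomial.eval_add, Polynomial.eval_mul,
        Polynomial.eval_X, Polynomial.eval_smul, smul_eq_mul] at e2
      rw [brR_L1, brL_L1, hL0 (k-j) (z+m)] at e2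
      simp only [sub_zero] at e2
      rw [show l + m = l + m from rfl] at e2
      linear_combination e2
    have hp : (D l (Lb j)).1 k
        - Polynomial.C ((F (k-j)).eval (-l)) * (X + Polynomial.C (2*l)) = 0 := by
      apply HL1 hl
      intro m z
      simp only [Polynomial.eval_sub, Polynomial.eval_mul, Polynomial.eval_add,
        Polynomial.eval_C, Polynomial.eval_X]
      linear_combination hsc m z
    intro z
    have e := congrArg (Polynomial.eval z) hp
    simp only [Polynomial.eval_sub, Polynomial.eval_mul, Polynomial.eval_add,
      Polynomial.eval_C, Polynomial.eval_X, Polynomial.eval_zero] at e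
    linear_combination e
  · intro j k
    have hsc : ∀ m z, (1/2) * (z * ((D l (Gb j)).2 k).eval z + l * ((D l (Gb j)).2 k).eval z)
        + ((3/2)*m) * ((D l (Gb j)).2 k).eval z
        = ((D l (Gb j)).2 k).eval (-(l+m)) * ((1/2)*z + (3/2)*(l+m))
          + ((F (k-j)).eval (-l) * ((z+m) + 2*l)) * ((1/2)*z + (3/2)*m) := by
      intro m z
      have e := hbr l m (Gb j) (Lb 0)
      rw [br_Gb_Lb0, map_add, map_smul, map_smul, hdc] at e
      have e2 := congrArg (fun y : CLS => (y.2 k).eval z) e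
      simp only [add_snd_ap, dC_snd_ap, smul_snd_ap, Polynomial.eval_add, Polynomial.eval_mul,
        Polynomial.eval_X, Polynomial.eval_smul, smul_eq_mul] at e2
      rw [brR_L2, brL_G2, hL0 (k-j) (z+m)] at e2
      simp only [sub_zero] at e2
      linear_combination e2
    have hp : (D l (Gb j)).2 k
        - Polynomial.C ((F (k-j)).eval (-l)) * (X + Polynomial.C ((3/2)*l)) = 0 := by
      apply HG2 hl
      intro m z
      simp only [Polynomial.eval_sub, Polynomial.eval_mul, Polynomial.eval_add,
        Polynomial.eval_C, Polynomial.eval_X]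
      linear_combination hsc m z
    intro z
    have e := congrArg (Polynomial.eval z) hp
    simp only [Polynomial.eval_sub, Polynomial.eval_mul, Polynomial.eval_add,
      Polynomial.eval_C, Polynomial.eval_X, Polynomial.eval_zero] at e
    linear_combination e

lemma oddGen (D : ℂ → CLS →ₗ[ℂ] CLS) (h : IsOddCDer D) (Hh : ℤ →₀ ℂ[X]) (l : ℂ)
    (hl : l ≠ 0)
    (hL0 : ∀ k z, ((D l (Lb 0)).2 k).eval z = (Hh k).eval (-l) * ((1/2)*z + (3/2)*l)) :
    (∀ j k z, ((D l (Lb j)).2 k).eval z = (Hh (k-j)).eval (-l) * ((1/2)*z + (3/2)*l)) ∧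
    (∀ j k z, ((D l (Gb j)).1 k).eval z = 2 * (Hh (k-j)).eval (-l)) := by
  obtain ⟨hpar, hpoly, hdc, hbr⟩ := h
  constructor
  · intro j k
    have hsc : ∀ m z, z * ((D l (Lb j)).2 k).eval z + l * ((D l (Lb j)).2 k).eval z
        + (2*m) * ((D l (Lb j)).2 k).eval z
        = ((D l (Lb j)).2 k).eval (-(l+m)) * ((1/2)*z + (3/2)*(l+m))
          + ((Hh (k-j)).eval (-l) * ((1/2)*(z+m) + (3/2)*l)) * (z + (3/2)*m) := by
      intro m z
      have e := (hbr l m (Lb j) (Lb 0)).1 rfl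
      rw [br_Lb_Lb0, map_add, map_smul, hdc] at e
      have e2 := congrArg (fun y : CLS => (y.2 k).eval z) e
      simp only [add_snd_ap, dC_snd_ap, smul_snd_ap, Polynomial.eval_add, Polynomial.eval_mul,
        Polynomial.eval_X, Polynomial.eval_smul, smul_eq_mul] at e2
      rw [brR_L2, brL_L2, hL0 (k-j) (z+m)] at e2
      simp only [sub_zero] at e2
      linear_combination e2
    have hp : (D l (Lb j)).2 k
        - Polynomial.C ((Hh (k-j)).eval (-l))
          * (Polynomial.C (1/2) * X + Polynomial.C ((3/2)*l)) = 0 := by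
      apply HL2 hl
      intro m z
      simp only [Polynomial.eval_sub, Polynomial.eval_mul, Polynomial.eval_add,
        Polynomial.eval_C, Polynomial.eval_X]
      linear_combination hsc m z
    intro z
    have e := congrArg (Polynomial.eval z) hp
    simp only [Polynomial.eval_sub, Polynomial.eval_mul, Polynomial.eval_add,
      Polynomial.eval_C, Polynomial.eval_X, Polynomial.eval_zero] at e
    linear_combination e
  · intro j k
    have hsc : ∀ m z, (1/2) * (z * ((D l (Gb j)).1 k).eval z + l * ((D l (Gb j)).1 k).eval z)
        + ((3/2)*m) * ((D l (Gb j)).1 k).eval z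
        = ((D l (Gb j)).1 k).eval (-(l+m)) * (z + 2*(l+m))
          - 2 * ((Hh (k-j)).eval (-l) * ((1/2)*(z+m) + (3/2)*l)) := by
      intro m z
      have e := (hbr l m (Gb j) (Lb 0)).2 rfl
      rw [br_Gb_Lb0, map_add, map_smul, map_smul, hdc] at e
      have e2 := congrArg (fun y : CLS => (y.1 k).eval z) e
      simp only [add_fst_ap, sub_fst_ap, dC_fst_ap, smul_fst_ap, Polynomial.eval_add,
        Polynomial.eval_sub, Polynomial.eval_mul,
        Polynomial.eval_X, Polynomial.eval_smul, smul_eq_mul] at e2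
      rw [brR_L1, brL_G1, hL0 (k-j) (z+m)] at e2
      simp only [sub_zero] at e2
      linear_combination e2
    have hp : (D l (Gb j)).1 k - Polynomial.C (2 * (Hh (k-j)).eval (-l)) = 0 := by
      apply HG1 hl
      intro m z
      simp only [Polynomial.eval_sub, Polynomial.eval_mul, Polynomial.eval_add,
        Polynomial.eval_C, Polynomial.eval_X]
      linear_combination hsc m z
    intro z
    have e := congrArg (Polynomial.eval z) hp
    simp only [Polynomial.eval_sub, Polynomial.eval_mul, Polynomial.eval_add,
      Polynomial.eval_C, Polynomial.eval_X, Polynomial.eval_zero] at e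
    linear_combination e

end Aux9
section Aux10
open Finsupp

lemma dC_add (u v : CLS) : dC (u + v) = dC u + dC v := by
  apply CLS_ext <;> intro k z <;> simp [mul_add]

lemma spanAll (D₀ D₁ : ℂ → CLS →ₗ[ℂ] CLS)
    (h₀dc : ∀ l u, D₀ l (dC u) = dC (D₀ l u) + l • D₀ l u)
    (h₁dc : ∀ l u, D₁ l (dC u) = dC (D₁ l u) + l • D₁ l u)
    (x : CLS) (l : ℂ)
    (hbaseL : ∀ j, D₀ l (Lb j) + D₁ l (Lb j) = br l x (Lb j))
    (hbaseG : ∀ j, D₀ l (Gb j) + D₁ l (Gb j) = br l x (Gb j)) :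
    ∀ v, D₀ l v + D₁ l v = br l x v := by
  set S : CLS → Prop := fun v => D₀ l v + D₁ l v = br l x v with hS
  have h0 : S 0 := by
    simp only [hS, map_zero, add_zero, br_zero_right]
  have hadd : ∀ v w, S v → S w → S (v + w) := by
    intro v w hv hw
    simp only [hS, map_add, br_add_right] at *
    rw [← hv, ← hw]; abel
  have hsmul : ∀ (c : ℂ) (v : CLS), S v → S (c • v) := by
    intro c v hv
    simp only [hS, map_smul, br_smul_right] at *
    rw [← hv]; rw [smul_add]
  have hdCc : ∀ v, S v → S (dC v) := by
    intro v hv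
    simp only [hS] at *
    rw [h₀dc, h₁dc, br_dC_right, ← hv, dC_add, smul_add]
    abel
  have hXnL : ∀ (n : ℕ) (j : ℤ), S ((Finsupp.single j ((X:ℂ[X])^n), 0) : CLS) := by
    intro n
    induction n with
    | zero =>
      intro j
      have : ((Finsupp.single j ((X:ℂ[X])^0), 0) : CLS) = Lb j := by
        rw [pow_zero]; rfl
      rw [this]; exact hbaseL j
    | succ n ih =>
      intro j
      have heq : dC ((Finsupp.single j ((X:ℂ[X])^n), 0) : CLS)
          = ((Finsupp.single j ((X:ℂ[X])^(n+1)), 0) : CLS) := by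
        apply CLS_ext <;> intro k z
        · simp only [dC_fst_ap]
          rw [Finsupp.single_apply, Finsupp.single_apply]
          split <;> simp [pow_succ] <;> ring
        · simp [dC]
      have := hdCc _ (ih j)
      rwa [heq] at this
  have hXnG : ∀ (n : ℕ) (j : ℤ), S ((0, Finsupp.single j ((X:ℂ[X])^n)) : CLS) := by
    intro n
    induction n with
    | zero =>
      intro j
      have : ((0, Finsupp.single j ((X:ℂ[X])^0)) : CLS) = Gb j := by
        rw [pow_zero]; rfl
      rw [this]; exact hbaseG j
    | succ n ih =>
      intro j
      have heq : dC ((0, Finsupp.single j ((X:ℂ[X])^n)) : CLS)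
          = ((0, Finsupp.single j ((X:ℂ[X])^(n+1))) : CLS) := by
        apply CLS_ext <;> intro k z
        · simp [dC]
        · simp only [dC_snd_ap]
          rw [Finsupp.single_apply, Finsupp.single_apply]
          split <;> simp [pow_succ] <;> ring
      have := hdCc _ (ih j)
      rwa [heq] at this
  have hsingleL : ∀ (j : ℤ) (f : ℂ[X]), S ((Finsupp.single j f, 0) : CLS) := by
    intro j f
    induction f using Polynomial.induction_on' with
    | add p q hp hq =>
      have := hadd _ _ hp hq
      have heq : ((Finsupp.single j p, 0) : CLS) + (Finsupp.single j q, 0)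
          = ((Finsupp.single j (p + q), 0) : CLS) := by
        refine Prod.ext ?_ (by simp)
        simp [Finsupp.single_add]
      rwa [heq] at this
    | monomial n c =>
      have := hsmul c _ (hXnL n j)
      have heq : c • ((Finsupp.single j ((X:ℂ[X])^n), 0) : CLS)
          = ((Finsupp.single j (Polynomial.monomial n c), 0) : CLS) := by
        refine Prod.ext ?_ (by simp)
        show c • Finsupp.single j ((X:ℂ[X])^n) = _
        rw [Finsupp.smul_single, smul_eq_C_mul, Polynomial.C_mul_X_pow_eq_monomial]
      rwa [heq] at this
  have hsingleG : ∀ (j : ℤ) (f : ℂ[X]), S ((0, Finsupp.single j f) : CLS) := by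
    intro j f
    induction f using Polynomial.induction_on' with
    | add p q hp hq =>
      have := hadd _ _ hp hq
      have heq : ((0, Finsupp.single j p) : CLS) + (0, Finsupp.single j q)
          = ((0, Finsupp.single j (p + q)) : CLS) := by
        refine Prod.ext (by simp) ?_
        simp [Finsupp.single_add]
      rwa [heq] at this
    | monomial n c =>
      have := hsmul c _ (hXnG n j)
      have heq : c • ((0, Finsupp.single j ((X:ℂ[X])^n)) : CLS)
          = ((0, Finsupp.single j (Polynomial.monomial n c)) : CLS) := by
        refine Prod.ext (by simp) ?_
        show c • Finsupp.single j ((X:ℂ[X])^n) = _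
        rw [Finsupp.smul_single, smul_eq_C_mul, Polynomial.C_mul_X_pow_eq_monomial]
      rwa [heq] at this
  have hfst : ∀ w : ℤ →₀ ℂ[X], S ((w, 0) : CLS) := by
    intro w
    induction w using Finsupp.induction_linear with
    | zero => exact h0
    | add f g hf hg =>
      have := hadd _ _ hf hg
      have heq : ((f, 0) : CLS) + (g, 0) = ((f + g, 0) : CLS) := by
        refine Prod.ext rfl (by simp)
      rwa [heq] at this
    | single j f => exact hsingleL j f
  have hsnd : ∀ w : ℤ →₀ ℂ[X], S ((0, w) : CLS) := by
    intro w
    induction w using Finsupp.induction_linear with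
    | zero => exact h0
    | add f g hf hg =>
      have := hadd _ _ hf hg
      have heq : ((0, f) : CLS) + (0, g) = ((0, f + g) : CLS) := by
        refine Prod.ext (by simp) rfl
      rwa [heq] at this
    | single j f => exact hsingleG j f
  intro v
  have hv : v = ((v.1, 0) : CLS) + (0, v.2) := by
    refine Prod.ext (by simp) (by simp)
  have := hadd _ _ (hfst v.1) (hsnd v.2)
  rw [← hv] at this
  exact this

end Aux10
section Main
open Finsupp

lemma comp_sum_ev (s : Finset ℕ) (f : ℕ → CLS) (k : ℤ) (z : ℂ) :
    (((∑ t ∈ s, f t : CLS)).1 k).eval z = ∑ t ∈ s, (((f t).1 k).eval z) := by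
  rw [Prod.fst_sum, Finsupp.finset_sum_apply, Polynomial.eval_finset_sum]

lemma comp_sum_ev2 (s : Finset ℕ) (f : ℕ → CLS) (k : ℤ) (z : ℂ) :
    (((∑ t ∈ s, f t : CLS)).2 k).eval z = ∑ t ∈ s, (((f t).2 k).eval z) := by
  rw [Prod.snd_sum, Finsupp.finset_sum_apply, Polynomial.eval_finset_sum]

lemma ev_QQ (w w' : ℤ →₀ ℂ[X]) (k : ℤ) (R : ℂ[X] → ℂ[X] → ℂ[X]) (l' : ℂ) :
    (w.sum fun i f => w'.sum fun j g => if i + j = k then (R f g).eval l' else 0)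
    = Polynomial.eval l' (w.sum fun i f => w'.sum fun j g => if i + j = k then R f g else 0) := by
  unfold Finsupp.sum
  rw [Polynomial.eval_finset_sum]
  refine Finset.sum_congr rfl fun i _ => ?_
  rw [Polynomial.eval_finset_sum]
  refine Finset.sum_congr rfl fun j _ => ?_
  change (if i + j = k then (R (w i) (w' j)).eval l' else 0)
      = Polynomial.eval l' (if i + j = k then R (w i) (w' j) else 0)
  split <;> simp

theorem stmt15' (D₀ D₁ : ℂ → CLS →ₗ[ℂ] CLS)
    (h₀ : IsEvenCDer D₀) (h₁ : IsOddCDer D₁) :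
    ∃ x : CLS, ∀ (l : ℂ) (u : CLS), D₀ l u + D₁ l u = br l x u := by
  obtain ⟨F, hF⟩ := evenL0 D₀ h₀
  obtain ⟨Hh, hH⟩ := oddL0 D₁ h₁
  refine ⟨(F, Hh), ?_⟩
  have main : ∀ l : ℂ, l ≠ 0 → ∀ v, D₀ l v + D₁ l v = br l (F, Hh) v := by
    intro l hl
    obtain ⟨hL0, hG0⟩ := hF l hl
    obtain ⟨hL0', hG0'⟩ := hH l hl
    obtain ⟨hLj, hGj⟩ := evenGen D₀ h₀ F l hl hL0
    obtain ⟨hLj', hGj'⟩ := oddGen D₁ h₁ Hh l hl hL0'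
    apply spanAll D₀ D₁ h₀.2.2.1 h₁.2.2.1 (F, Hh) l
    · intro j
      apply CLS_ext <;> intro k z
      · have hz : (D₁ l (Lb j)).1 = 0 := (h₁.1 l (Lb j)).1 rfl
        rw [add_fst_ap, Polynomial.eval_add, hz, brR_L1, hLj j k z]
        simp
      · have hz : (D₀ l (Lb j)).2 = 0 := (h₀.1 l (Lb j)).1 rfl
        rw [add_snd_ap, Polynomial.eval_add, hz, brR_L2, hLj' j k z]
        simp
    · intro j
      apply CLS_ext <;> intro k z
      · have hz : (D₀ l (Gb j)).1 = 0 := (h₀.1 l (Gb j)).2 rfl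
        rw [add_fst_ap, Polynomial.eval_add, hz, brR_G1, hGj' j k z]
        simp
      · have hz : (D₁ l (Gb j)).2 = 0 := (h₁.1 l (Gb j)).2 rfl
        rw [add_snd_ap, Polynomial.eval_add, hz, brR_G2, hGj j k z]
        simp
  -- extension to every l (in particular l = 0)
  intro l u
  obtain ⟨N₀, w₀, hw₀⟩ := h₀.2.1 u
  obtain ⟨N₁, w₁, hw₁⟩ := h₁.2.1 u
  apply CLS_ext <;> intro k z
  · set P : ℂ[X] := (∑ t ∈ Finset.range N₀, Polynomial.C (((w₀ t).1 k).eval z) * X^t)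
      + ∑ t ∈ Finset.range N₁, Polynomial.C (((w₁ t).1 k).eval z) * X^t with hPdef
    set Q : ℂ[X] :=
      (F.sum fun i f => u.1.sum fun j g => if i + j = k then
          (f.comp (-X)) * (g.comp (Polynomial.C z + X)) * (Polynomial.C z + 2*X) else 0)
      + (Hh.sum fun i f => u.2.sum fun j g => if i + j = k then
          Polynomial.C 2 * (f.comp (-X)) * (g.comp (Polynomial.C z + X)) else 0) with hQdef
    have hP : ∀ l' : ℂ, ((D₀ l' u + D₁ l' u).1 k).eval z = P.eval l' := by
      intro l'
      rw [add_fst_ap, Polynomial.eval_add, hw₀ l', hw₁ l', comp_sum_ev, comp_sum_ev,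
        hPdef, Polynomial.eval_add, Polynomial.eval_finset_sum, Polynomial.eval_finset_sum]
      congr 1
      · refine Finset.sum_congr rfl fun t _ => ?_
        show Polynomial.eval z ((l' ^ t • w₀ t).1 k) = _
        rw [smul_fst_ap, Polynomial.eval_smul, Polynomial.eval_mul, Polynomial.eval_pow,
          Polynomial.eval_C, Polynomial.eval_X, smul_eq_mul]
        ring
      · refine Finset.sum_congr rfl fun t _ => ?_
        show Polynomial.eval z ((l' ^ t • w₁ t).1 k) = _
        rw [smul_fst_ap, Polynomial.eval_smul, Polynomial.eval_mul, Polynomial.eval_pow,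
          Polynomial.eval_C, Polynomial.eval_X, smul_eq_mul]
        ring
    have hQ : ∀ l' : ℂ, ((br l' ((F, Hh) : CLS) u).1 k).eval z = Q.eval l' := by
      intro l'
      rw [br_fst_ev, hQdef, Polynomial.eval_add, ← ev_QQ, ← ev_QQ]
      congr 1
      · refine Finsupp.sum_congr fun i _ => Finsupp.sum_congr fun j _ => ?_
        simp only []
        split
        · simp [Polynomial.eval_comp]
        · rfl
      · refine Finsupp.sum_congr fun i _ => Finsupp.sum_congr fun j _ => ?_
        simp only []
        split
        · simp [Polynomial.eval_comp]
        · rfl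
    have hPQ : P = Q := by
      apply poly_eq_of_eval_eq_off (s := ({0} : Set ℂ)) (Set.finite_singleton _)
      intro l' hl'
      rw [← hP l', ← hQ l', main l' (by simpa using hl') u]
    rw [hP l, hPQ, ← hQ l]
  · set P : ℂ[X] := (∑ t ∈ Finset.range N₀, Polynomial.C (((w₀ t).2 k).eval z) * X^t)
      + ∑ t ∈ Finset.range N₁, Polynomial.C (((w₁ t).2 k).eval z) * X^t with hPdef
    set Q : ℂ[X] :=
      (F.sum fun i f => u.2.sum fun j g => if i + j = k then
          (f.comp (-X)) * (g.comp (Polynomial.C z + X))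
            * (Polynomial.C z + Polynomial.C (3/2) * X) else 0)
      + (Hh.sum fun i f => u.1.sum fun j g => if i + j = k then
          (f.comp (-X)) * (g.comp (Polynomial.C z + X))
            * (Polynomial.C ((1/2)*z) + Polynomial.C (3/2) * X) else 0) with hQdef
    have hP : ∀ l' : ℂ, ((D₀ l' u + D₁ l' u).2 k).eval z = P.eval l' := by
      intro l'
      rw [add_snd_ap, Polynomial.eval_add, hw₀ l', hw₁ l', comp_sum_ev2, comp_sum_ev2,
        hPdef, Polynomial.eval_add, Polynomial.eval_finset_sum, Polynomial.eval_finset_sum]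
      congr 1
      · refine Finset.sum_congr rfl fun t _ => ?_
        show Polynomial.eval z ((l' ^ t • w₀ t).2 k) = _
        rw [smul_snd_ap, Polynomial.eval_smul, Polynomial.eval_mul, Polynomial.eval_pow,
          Polynomial.eval_C, Polynomial.eval_X, smul_eq_mul]
        ring
      · refine Finset.sum_congr rfl fun t _ => ?_
        show Polynomial.eval z ((l' ^ t • w₁ t).2 k) = _
        rw [smul_snd_ap, Polynomial.eval_smul, Polynomial.eval_mul, Polynomial.eval_pow,
          Polynomial.eval_C, Polynomial.eval_X, smul_eq_mul]
        ring
    have hQ : ∀ l' : ℂ, ((br l' ((F, Hh) : CLS) u).2 k).eval z = Q.eval l' := by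
      intro l'
      rw [br_snd_ev, hQdef, Polynomial.eval_add, ← ev_QQ, ← ev_QQ]
      congr 1
      · refine Finsupp.sum_congr fun i _ => Finsupp.sum_congr fun j _ => ?_
        simp only []
        split
        · first
          | (simp [Polynomial.eval_comp]; ring)
          | simp [Polynomial.eval_comp]
        · rfl
      · refine Finsupp.sum_congr fun i _ => Finsupp.sum_congr fun j _ => ?_
        simp only []
        split
        · first
          | (simp [Polynomial.eval_comp]; ring)
          | simp [Polynomial.eval_comp]
        · rfl
    have hPQ : P = Q := by
      apply poly_eq_of_eval_eq_off (s := ({0} : Set ℂ)) (Set.finite_singleton _)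
      intro l' hl'
      rw [← hP l', ← hQ l', main l' (by simpa using hl') u]
    rw [hP l, hPQ, ← hQ l]
end Main

/-- every conformal superderivation of `𝔠𝔩𝔰` is inner,
`CDer(𝔠𝔩𝔰) = CInn(𝔠𝔩𝔰)`: any sum of an even and an odd conformal superderivation is
`ad_x` for some `x ∈ 𝔠𝔩𝔰`. -/
theorem stmt15 (D₀ D₁ : ℂ → CLS →ₗ[ℂ] CLS)
    (h₀ : IsEvenCDer D₀) (h₁ : IsOddCDer D₁) :
    ∃ x : CLS, ∀ (l : ℂ) (u : CLS), D₀ l u + D₁ l u = br l x u :=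
  stmt15' D₀ D₁ h₀ h₁
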